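/- Let Δ = {−1,1}^ℕ be the Cantor space with the product probability measure μ (the countable power of (δ₁ + δ₋₁)/2). For n ∈ ℕ, equip C(Δ) with the equivalent norm ‖f‖_n = (1/n)‖f‖_∞ + ∫_Δ |f| dμ. Then for every weakly Cauchy sequence (f_k) in the sup-norm closed unit ball of C(Δ), ca computed in the norm ‖·‖_n satisfies ca((f_k)) ≤ 2/n; consequently, the identity operator Q_n from C(Δ) (sup norm) to Y_n = (C(Δ), ‖·‖_n) satisfies cc(Q_n) ≤ 2/n. -/

import Mathlib

open Filter Metric Set MeasureTheory NormedSpace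
open scoped Topology

noncomputable section

/-- The Cantor space `Δ = {-1,1}^ℕ`. -/
abbrev CantorDelta : Type := ℕ → ({-1, 1} : Set ℝ)

instance : Finite ({-1, 1} : Set ℝ) :=
  ((Set.finite_singleton (1 : ℝ)).insert (-1)).to_subtype

/-- `μ` is the product of the uniform probability measures `(δ₁ + δ₋₁)/2` on the
coordinates iff it is a probability measure giving each cylinder determined by
finitely many coordinates the measure `2^{-number of coordinates}`. -/
def IsCoinProductMeasure (μ : Measure CantorDelta) : Prop :=
  IsProbabilityMeasure μ ∧
    ∀ (s : Finset ℕ) (v : ℕ → ({-1, 1} : Set ℝ)),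
      μ {x : CantorDelta | ∀ i ∈ s, x i = v i} = (2⁻¹ : ENNReal) ^ s.card

/-- `ca` of a sequence with respect to an abstract distance function `d`:
`ca((x_k)) = inf_n sup { d(x_k, x_l) : k, l ≥ n }`. -/
def caSeqD {Z : Type*} (d : Z → Z → ℝ) (x : ℕ → Z) : ℝ :=
  ⨅ n : ℕ, ⨆ p : {p : ℕ × ℕ // n ≤ p.1 ∧ n ≤ p.2}, d (x (p : ℕ × ℕ).1) (x (p : ℕ × ℕ).2)

/-- The distance of the equivalent norm `‖f‖_n = (1/n)‖f‖_∞ + ∫ |f| dμ` on `C(Δ)`. -/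
def distN (μ : Measure CantorDelta) (n : ℕ) (f g : C(CantorDelta, ℝ)) : ℝ :=
  (1 / (n : ℝ)) * ‖f - g‖ + ∫ x, |f x - g x| ∂μ

section Aux

variable (μ : Measure CantorDelta)

lemma aux_integrable [IsFiniteMeasure μ] (g : CantorDelta → ℝ)
    (hg : AEStronglyMeasurable g μ) (hb : ∀ x, |g x| ≤ 2) : Integrable g μ :=
  Integrable.mono' (integrable_const 2) hg
    (ae_of_all _ (by simpa [Real.norm_eq_abs] using hb))

/-- The key estimate: `ca((f_k)) ≤ 2/n` for weakly Cauchy `(f_k)` in the unit ball. -/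
lemma ca_le_aux (hμ : IsProbabilityMeasure μ) (n : ℕ) (hn : 0 < n)
    (f : ℕ → C(CantorDelta, ℝ)) (hf : ∀ k, f k ∈ closedBall (0 : C(CantorDelta, ℝ)) 1)
    (hw : ∀ φ : StrongDual ℝ C(CantorDelta, ℝ), CauchySeq fun k => φ (f k)) :
    caSeqD (distN μ n) f ≤ 2 / n := by
  have hf1 : ∀ k, ‖f k‖ ≤ 1 := by
    intro k; simpa [mem_closedBall_zero_iff] using hf k
  have hfx : ∀ k x, |f k x| ≤ 1 := fun k x => by
    calc |f k x| = ‖f k x‖ := (Real.norm_eq_abs _).symm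
    _ ≤ ‖f k‖ := (f k).norm_coe_le_norm x
    _ ≤ 1 := hf1 k
  -- pointwise Cauchy, hence pointwise convergent
  have hc : ∀ x : CantorDelta, CauchySeq fun k => f k x := fun x =>
    hw (ContinuousMap.evalCLM ℝ x)
  have hex : ∀ x : CantorDelta, ∃ y : ℝ, Tendsto (fun k => f k x) atTop (𝓝 y) := fun x =>
    cauchySeq_tendsto_of_complete (hc x)
  choose g hg using hex
  have hg1 : ∀ x, |g x| ≤ 1 := fun x =>
    le_of_tendsto' ((hg x).abs) (fun k => hfx k x)
  have hgm : AEStronglyMeasurable g μ :=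
    aestronglyMeasurable_of_tendsto_ae atTop
      (fun k => ((f k).continuous.measurable).aestronglyMeasurable)
      (ae_of_all _ hg)
  -- each |f k - g| is integrable
  have hint : ∀ k, Integrable (fun x => |f k x - g x|) μ := by
    intro k
    refine aux_integrable μ _ ((measurable_abs.comp_aemeasurable
      ((f k).continuous.measurable.aemeasurable.sub hgm.aemeasurable)).aestronglyMeasurable)
      (fun x => ?_)
    rw [abs_abs]
    calc |f k x - g x| ≤ |f k x| + |g x| := abs_sub _ _
    _ ≤ 1 + 1 := add_le_add (hfx k x) (hg1 x)
    _ = 2 := by norm_num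
  -- the integrals tend to 0 by dominated convergence
  have hten : Tendsto (fun k => ∫ x, |f k x - g x| ∂μ) atTop (𝓝 0) := by
    have h0 : (0 : ℝ) = ∫ x, (0 : ℝ) ∂μ := by simp
    rw [h0]
    refine tendsto_integral_of_dominated_convergence (fun _ => (2 : ℝ))
      (fun k => (hint k).aestronglyMeasurable) (integrable_const 2)
      (fun k => ae_of_all _ fun x => ?_) (ae_of_all _ fun x => ?_)
    · rw [Real.norm_eq_abs, abs_abs]
      calc |f k x - g x| ≤ |f k x| + |g x| := abs_sub _ _
      _ ≤ 1 + 1 := add_le_add (hfx k x) (hg1 x)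
      _ = 2 := by norm_num
    · have := ((hg x).sub (tendsto_const_nhds : Tendsto (fun _ : ℕ => g x) atTop (𝓝 (g x)))).abs
      simpa using this
  -- conclude
  have hnn : (0 : ℝ) < (n : ℝ) := by exact_mod_cast hn
  refine le_of_forall_pos_le_add (fun ε hε => ?_)
  obtain ⟨N, hN⟩ := (Metric.tendsto_atTop.mp hten) (ε / 2) (by linarith)
  have hNle : ∀ k ≥ N, ∫ x, |f k x - g x| ∂μ ≤ ε / 2 := by
    intro k hk
    have := hN k hk
    rw [Real.dist_eq, sub_zero] at this
    calc ∫ x, |f k x - g x| ∂μ ≤ |∫ x, |f k x - g x| ∂μ| := le_abs_self _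
    _ ≤ ε / 2 := le_of_lt this
  -- bound the sup at index N
  have hS : ∀ p : {p : ℕ × ℕ // N ≤ p.1 ∧ N ≤ p.2},
      distN μ n (f (p : ℕ × ℕ).1) (f (p : ℕ × ℕ).2) ≤ 2 / n + ε := by
    rintro ⟨⟨k, l⟩, hk, hl⟩
    have hnorm : ‖f k - f l‖ ≤ 2 := by
      calc ‖f k - f l‖ ≤ ‖f k‖ + ‖f l‖ := norm_sub_le _ _
      _ ≤ 1 + 1 := add_le_add (hf1 k) (hf1 l)
      _ = 2 := by norm_num
    have hIkl : ∫ x, |f k x - f l x| ∂μ ≤ ε := by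
      have hsum : ∀ x, |f k x - f l x| ≤ |f k x - g x| + |f l x - g x| := by
        intro x
        have : f k x - f l x = (f k x - g x) - (f l x - g x) := by ring
        rw [this]
        exact abs_sub _ _
      calc ∫ x, |f k x - f l x| ∂μ
          ≤ ∫ x, (|f k x - g x| + |f l x - g x|) ∂μ := by
            refine integral_mono ?_ ((hint k).add (hint l)) hsum
            exact aux_integrable μ _ ((measurable_abs.comp_aemeasurable
              ((f k).continuous.measurable.aemeasurable.sub
                ((f l).continuous.measurable.aemeasurable))).aestronglyMeasurable)
              (fun x => by
                rw [abs_abs]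
                calc |f k x - f l x| ≤ |f k x| + |f l x| := abs_sub _ _
                _ ≤ 1 + 1 := add_le_add (hfx k x) (hfx l x)
                _ = 2 := by norm_num)
        _ = (∫ x, |f k x - g x| ∂μ) + ∫ x, |f l x - g x| ∂μ :=
            integral_add (hint k) (hint l)
        _ ≤ ε / 2 + ε / 2 := add_le_add (hNle k hk) (hNle l hl)
        _ = ε := by ring
    have hikl : (f k : CantorDelta → ℝ) - (f l : CantorDelta → ℝ) =
        fun x => f k x - f l x := rfl
    calc distN μ n (f k) (f l) = (1 / (n : ℝ)) * ‖f k - f l‖ + ∫ x, |f k x - f l x| ∂μ := rfl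
    _ ≤ (1 / (n : ℝ)) * 2 + ε := by
        refine add_le_add ?_ hIkl
        exact mul_le_mul_of_nonneg_left hnorm (by positivity)
    _ = 2 / n + ε := by ring
  -- caSeqD ≤ sup at N ≤ 2/n + ε
  have hbdd : BddBelow (Set.range fun N : ℕ =>
      ⨆ p : {p : ℕ × ℕ // N ≤ p.1 ∧ N ≤ p.2},
        distN μ n (f (p : ℕ × ℕ).1) (f (p : ℕ × ℕ).2)) := by
    refine ⟨0, ?_⟩
    rintro _ ⟨M, rfl⟩
    refine Real.iSup_nonneg fun p => ?_
    have : (0:ℝ) ≤ (1 / (n : ℝ)) * ‖f (p : ℕ × ℕ).1 - f (p : ℕ × ℕ).2‖ := by positivity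
    have h2 : (0:ℝ) ≤ ∫ x, |f (p : ℕ × ℕ).1 x - f (p : ℕ × ℕ).2 x| ∂μ :=
      integral_nonneg fun x => abs_nonneg _
    exact add_nonneg this h2
  calc caSeqD (distN μ n) f
      ≤ ⨆ p : {p : ℕ × ℕ // N ≤ p.1 ∧ N ≤ p.2},
        distN μ n (f (p : ℕ × ℕ).1) (f (p : ℕ × ℕ).2) := ciInf_le hbdd N
  _ ≤ 2 / n + ε := Real.iSup_le hS (by positivity)

end Aux

/-- On the Cantor space `Δ = {-1,1}^ℕ` with the coin-tossing product measure `μ`,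
every weakly Cauchy sequence in the sup-norm unit ball of `C(Δ)` satisfies
`ca((f_k)) ≤ 2/n` in the norm `‖·‖_n`; consequently, the identity operator
`Q_n : C(Δ) → Y_n = (C(Δ), ‖·‖_n)` satisfies `cc(Q_n) ≤ 2/n`. -/
theorem ca_le_and_cc_le_of_coinMeasure
    (μ : Measure CantorDelta) (hμ : IsCoinProductMeasure μ) (n : ℕ) (hn : 0 < n) :
    (∀ f : ℕ → C(CantorDelta, ℝ), (∀ k, f k ∈ closedBall (0 : C(CantorDelta, ℝ)) 1) →
      (∀ φ : StrongDual ℝ C(CantorDelta, ℝ), CauchySeq fun k => φ (f k)) →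
      caSeqD (distN μ n) f ≤ 2 / n) ∧
    sSup {r | ∃ f : ℕ → C(CantorDelta, ℝ),
        (∀ k, f k ∈ closedBall (0 : C(CantorDelta, ℝ)) 1) ∧
        (∀ φ : StrongDual ℝ C(CantorDelta, ℝ), CauchySeq fun k => φ (f k)) ∧
        r = caSeqD (distN μ n) f} ≤ 2 / n := by
  have h1 : ∀ f : ℕ → C(CantorDelta, ℝ), (∀ k, f k ∈ closedBall (0 : C(CantorDelta, ℝ)) 1) →
      (∀ φ : StrongDual ℝ C(CantorDelta, ℝ), CauchySeq fun k => φ (f k)) →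
      caSeqD (distN μ n) f ≤ 2 / n := fun f hf hw => ca_le_aux μ hμ.1 n hn f hf hw
  refine ⟨h1, Real.sSup_le ?_ (by positivity)⟩
  rintro r ⟨f, hf, hw, rfl⟩
  exact h1 f hf hw
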